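/- Let N : ℝ → ℝ be differentiable, q : ℝ → ℝ differentiable with q'(s) = N(q(s)) for all s. Suppose σ : ℝ → ℝ is differentiable on an open interval I with N(q(σ(t))) > 0 and σ'(t) = 1/√(N(q(σ(t)))) for all t ∈ I, and let ρ be a constant function. Then σ is twice differentiable and the curve (σ, ρ) satisfies the extremal equations σ'' = (1/2)·N'(q(σ))·(ρ'² − σ'²) and ρ'' = −N'(q(σ))·σ'·ρ'. (These are the straight extremals parallel to the σ axis, passing through every point ρ = const.) -/

import Mathlib

/-- Straight extremals parallel to the `σ` axis: if `σ' = 1/√(N(q(σ)))` on an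
open interval `I` with `N(q(σ)) > 0`, and `ρ` is a constant function, then `σ`
is twice differentiable on `I` and the curve `(σ, ρ)` satisfies the extremal
equations of the metric `ds² = -N(q)(dσ² + dρ²)`. -/
theorem straight_sigma_curves_are_extremals
    (N q σ ρ : ℝ → ℝ)
    (hN : Differentiable ℝ N)
    (hq : Differentiable ℝ q) (hq' : ∀ s, deriv q s = N (q s))
    (I : Set ℝ) (hIopen : IsOpen I) (hIconn : IsPreconnected I)
    (hσ : ∀ t ∈ I, DifferentiableAt ℝ σ t)
    (hNpos : ∀ t ∈ I, 0 < N (q (σ t)))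
    (hσ' : ∀ t ∈ I, deriv σ t = 1 / Real.sqrt (N (q (σ t))))
    (r : ℝ) (hρ : ρ = fun _ => r) :
    (∀ t ∈ I, DifferentiableAt ℝ (deriv σ) t) ∧
    (∀ t ∈ I,
      deriv (deriv σ) t
        = (1 / 2) * deriv N (q (σ t)) * ((deriv ρ t) ^ 2 - (deriv σ t) ^ 2) ∧
      deriv (deriv ρ) t
        = -(deriv N (q (σ t)) * deriv σ t * deriv ρ t)) := by
  subst hρ
  set g : ℝ → ℝ := fun t => 1 / Real.sqrt (N (q (σ t))) with hg
  have key : ∀ t ∈ I, HasDerivAt g (-(deriv N (q (σ t)) / (2 * N (q (σ t))))) t := by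
    intro t ht
    have ha : 0 < N (q (σ t)) := hNpos t ht
    have hs : 0 < Real.sqrt (N (q (σ t))) := Real.sqrt_pos.2 ha
    have h1 : HasDerivAt σ (1 / Real.sqrt (N (q (σ t)))) t := by
      have := (hσ t ht).hasDerivAt
      rwa [hσ' t ht] at this
    have h2 : HasDerivAt q (N (q (σ t))) (σ t) := by
      have := (hq (σ t)).hasDerivAt
      rwa [hq' (σ t)] at this
    have h3 : HasDerivAt N (deriv N (q (σ t))) (q (σ t)) := (hN _).hasDerivAt
    have hF : HasDerivAt (fun t => N (q (σ t)))
        (deriv N (q (σ t)) * (N (q (σ t)) * (1 / Real.sqrt (N (q (σ t)))))) t :=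
      h3.comp t (h2.comp t h1)
    have hsq : HasDerivAt (fun t => Real.sqrt (N (q (σ t))))
        (1 / (2 * Real.sqrt (N (q (σ t)))) *
          (deriv N (q (σ t)) * (N (q (σ t)) * (1 / Real.sqrt (N (q (σ t))))))) t :=
      (Real.hasDerivAt_sqrt (ne_of_gt ha)).comp t hF
    have hinv := hsq.inv (ne_of_gt hs)
    have heq : -(1 / (2 * Real.sqrt (N (q (σ t)))) *
          (deriv N (q (σ t)) * (N (q (σ t)) * (1 / Real.sqrt (N (q (σ t))))))) /
          Real.sqrt (N (q (σ t))) ^ 2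
        = -(deriv N (q (σ t)) / (2 * N (q (σ t)))) := by
      have h2' : Real.sqrt (N (q (σ t))) ^ 2 = N (q (σ t)) := Real.sq_sqrt ha.le
      field_simp
      rw [show Real.sqrt (N (q (σ t))) ^ 4 = (Real.sqrt (N (q (σ t))) ^ 2) ^ 2 by ring, h2']
      ring
    rw [heq] at hinv
    simp only [hg, one_div]
    exact hinv
  have hev : ∀ t ∈ I, deriv σ =ᶠ[nhds t] g := by
    intro t ht
    filter_upwards [hIopen.mem_nhds ht] with x hx
    exact hσ' x hx
  have hdiff : ∀ t ∈ I, DifferentiableAt ℝ (deriv σ) t := by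
    intro t ht
    exact ((key t ht).differentiableAt).congr_of_eventuallyEq (hev t ht)
  refine ⟨hdiff, fun t ht => ?_⟩
  have ha : 0 < N (q (σ t)) := hNpos t ht
  have hs : 0 < Real.sqrt (N (q (σ t))) := Real.sqrt_pos.2 ha
  have h2' : Real.sqrt (N (q (σ t))) ^ 2 = N (q (σ t)) := Real.sq_sqrt ha.le
  constructor
  · have : deriv (deriv σ) t = deriv g t := (hev t ht).deriv_eq
    rw [this, (key t ht).deriv, hσ' t ht]
    simp only [deriv_const', ne_eq]
    field_simp
    rw [h2']
    ring
  · simp
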